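/- Let p : Γ → G be a group homomorphism with finite kernel, and let S be a virtually cyclic subgroup of G. Then p⁻¹(S) is virtually cyclic. -/

import Mathlib

/-- A group is *virtually cyclic* if it contains a cyclic subgroup of finite index. -/
def IsVirtuallyCyclic (G : Type*) [Group G] : Prop :=
  ∃ H : Subgroup G, IsCyclic H ∧ H.FiniteIndex

lemma zpowers_isCyclic' {G : Type*} [Group G] (g : G) :
    IsCyclic (Subgroup.zpowers g) := by
  refine ⟨⟨g, Subgroup.mem_zpowers g⟩, fun x => ?_⟩
  obtain ⟨n, hn⟩ := x.2
  exact ⟨n, Subtype.ext (by simpa using hn)⟩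

/-- If `p : Γ → G` is a surjective homomorphism with finite kernel and `S ≤ G` is
virtually cyclic, then `p⁻¹(S)` is virtually cyclic. -/
theorem preimage_virtuallyCyclic_of_finite_kernel
    {Γ G : Type*} [Group Γ] [Group G] (p : Γ →* G)
    (hp : Function.Surjective p) (hker : Finite p.ker)
    (S : Subgroup G) (hS : IsVirtuallyCyclic S) :
    IsVirtuallyCyclic (S.comap p) := by
  obtain ⟨H, hHcyc, hHfi⟩ := hS
  obtain ⟨g, hg⟩ := hHcyc.exists_generator
  -- the generator, viewed in `G`
  set gG : G := ((g : S) : G) with hgG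
  obtain ⟨t, ht⟩ := hp gG
  -- the cyclic subgroup of Γ
  set T : Subgroup Γ := Subgroup.zpowers t with hT
  set C : Subgroup G := H.map S.subtype with hC
  have hCz : C = Subgroup.zpowers gG := by
    apply le_antisymm
    · rintro x ⟨y, hy, rfl⟩
      obtain ⟨n, hn⟩ := hg ⟨y, hy⟩
      refine ⟨n, ?_⟩
      have := congrArg (fun z : H => ((z : S) : G)) hn
      simpa [gG] using this
    · rw [Subgroup.zpowers_le]
      exact ⟨g, g.2, rfl⟩
  set K : Subgroup Γ := C.comap p with hK
  have hTK : T ≤ K := by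
    rw [hT, Subgroup.zpowers_le, hK, Subgroup.mem_comap, ht, hCz]
    exact Subgroup.mem_zpowers gG
  have hCS : C ≤ S := by
    rintro x ⟨y, hy, rfl⟩; exact y.2
  have hKQ : K ≤ S.comap p := Subgroup.comap_mono hCS
  have hTQ : T ≤ S.comap p := hTK.trans hKQ
  -- relindex of K in S.comap p is finite
  have hKrel : K.relIndex (S.comap p) ≠ 0 := by
    rw [hK, Subgroup.relIndex_comap, Subgroup.map_comap_eq_self_of_surjective hp,
      Subgroup.relIndex, Subgroup.subgroupOf, hC,
      Subgroup.comap_map_eq_self_of_injective S.subtype_injective]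
    exact hHfi.index_ne_zero
  -- relindex of T in K is finite: the quotient is covered by the kernel
  have hTKrel : T.relIndex K ≠ 0 := by
    rw [Subgroup.relIndex]
    have hkerK : ∀ k : Γ, k ∈ p.ker → k ∈ K := by
      intro k hk
      rw [hK, Subgroup.mem_comap, hk]
      exact C.one_mem
    have hsurj : Function.Surjective
        (fun k : p.ker => (QuotientGroup.mk ⟨(k : Γ), hkerK k k.2⟩ :
          K ⧸ T.subgroupOf K)) := by
      intro q
      induction q using QuotientGroup.induction_on with
      | H x =>
        have hx : p (x : Γ) ∈ Subgroup.zpowers gG := by rw [← hCz]; exact x.2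
        obtain ⟨n, hn⟩ := hx
        have hn' : gG ^ n = p (x : Γ) := hn
        have hker' : (x : Γ) * (t ^ n)⁻¹ ∈ p.ker := by
          rw [MonoidHom.mem_ker, map_mul, map_inv, map_zpow, ht, hn', mul_inv_cancel]
        refine ⟨⟨(x : Γ) * (t ^ n)⁻¹, hker'⟩, ?_⟩
        apply (QuotientGroup.eq (s := T.subgroupOf K)).mpr
        simp only [Subgroup.mem_subgroupOf, Subgroup.coe_mul, InvMemClass.coe_inv]
        have heq : (((x : Γ) * (t ^ n)⁻¹)⁻¹ * (x : Γ)) = t ^ n := by group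
        rw [heq]
        exact ⟨n, rfl⟩
    have : Finite (K ⧸ T.subgroupOf K) := Finite.of_surjective _ hsurj
    rw [Subgroup.index_eq_card]
    exact Nat.card_ne_zero.mpr ⟨⟨QuotientGroup.mk 1⟩, this⟩
  -- assemble
  haveI : IsCyclic T := zpowers_isCyclic' t
  refine ⟨T.subgroupOf (S.comap p), ?_, ?_⟩
  · exact isCyclic_of_surjective _ (Subgroup.subgroupOfEquivOfLe hTQ).symm.surjective
  · constructor
    show T.relIndex (S.comap p) ≠ 0
    rw [← Subgroup.relIndex_mul_relIndex T K (S.comap p) hTK hKQ]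
    exact mul_ne_zero hTKrel hKrel
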